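/- Let P be a measurable subset of Cantor space, τ a finite binary string, and δ > 0 with d(τ,P) ≥ δ. Then there exists an infinite binary sequence X extending τ such that for every finite σ with τ ⪯ σ ≺ X, the density d(σ,P) ≥ δ/2. -/
import Mathlib


open MeasureTheory ENNReal

/-! ### Cantor space and the uniform (coin-flipping) measure -/

/-- The binary digits of a real number in `[0,1)`, giving a point of Cantor space. -/
noncomputable def binaryDigits (x : ℝ) : ℕ → Bool :=
  fun n => decide (⌊x * 2 ^ (n + 1)⌋ % 2 = 1)

/-- The uniform (Lebesgue / coin-flipping) measure on Cantor space `2^ω`,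
obtained as the pushforward of Lebesgue measure on `[0,1)` under binary expansion. -/
noncomputable def μCantor : Measure (ℕ → Bool) :=
  Measure.map binaryDigits (volume.restrict (Set.Ico (0 : ℝ) 1))

/-- `σ` is an initial segment of the infinite sequence `X`. -/
def IsPrefixOf (σ : List Bool) (X : ℕ → Bool) : Prop :=
  ∀ i : Fin σ.length, X i = σ.get i

/-- The cylinder determined by a finite binary string. -/
def cylinder (σ : List Bool) : Set (ℕ → Bool) := {X | IsPrefixOf σ X}

/-- The open set generated by a set of finite binary strings. -/
def openOf (S : Set (List Bool)) : Set (ℕ → Bool) := ⋃ σ ∈ S, cylinder σ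

/-- The density of a set `P` above the string `τ`: `μ([τ] ∩ P) · 2^{|τ|}`. -/
noncomputable def dens (τ : List Bool) (P : Set (ℕ → Bool)) : ℝ≥0∞ :=
  μCantor (cylinder τ ∩ P) * 2 ^ τ.length

/-- The length-`n` initial segment of `X`, as a finite binary string. -/
def strPrefix (X : ℕ → Bool) (n : ℕ) : List Bool := (List.range n).map X

/-- A set of strings is prefix-free if no element is a proper prefix of another. -/
def PrefixFreeSet (S : Set (List Bool)) : Prop :=
  ∀ σ ∈ S, ∀ τ ∈ S, σ <+: τ → σ = τ

/-- The weight `∑_{σ ∈ S} 2^{-|σ|}` of a set of strings. -/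
noncomputable def weight (S : Set (List Bool)) : ℝ≥0∞ :=
  ∑' σ : S, 2⁻¹ ^ (σ : List Bool).length

/-- A set of strings is bounded if its weight is finite. -/
def BoundedStr (S : Set (List Bool)) : Prop := weight S < ⊤

/-- The tail `X(·+k)` of an infinite binary sequence. -/
def tailSeq (X : ℕ → Bool) (k : ℕ) : ℕ → Bool := fun n => X (n + k)

/-! ### Oracle computability -/

/-- The `e`-th computably enumerable set of naturals (the domain of the `e`-th
partial computable function). -/
def WEnum (e n : ℕ) : Prop := ((Denumerable.ofNat Nat.Partrec.Code e).eval n).Dom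

/-- `OracleComputes e X n m` holds if the `e`-th Turing functional with oracle `X`
outputs `m` on input `n`; a Turing functional is presented by the c.e. set `W_e`
of coded axioms `(σ, n, m)`, and `Γ_e^X(n) = m` iff some initial segment `σ` of `X`
has `(σ, n, m) ∈ W_e`. -/
def OracleComputes (e : ℕ) (X : ℕ → Bool) (n m : ℕ) : Prop :=
  ∃ σ : List Bool, IsPrefixOf σ X ∧
    WEnum e (Nat.pair (Encodable.encode σ) (Nat.pair n m))

def natOfBool (b : Bool) : ℕ := cond b 1 0

/-- `f : ℕ → ℕ` is computable with oracle `A`: some Turing functional with oracle `A`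
has graph exactly `f`. -/
def FnComputableIn (f : ℕ → ℕ) (A : ℕ → Bool) : Prop :=
  ∃ e, ∀ n m, OracleComputes e A n m ↔ m = f n

/-- Turing reducibility `B ≤_T A` for subsets of `ω` (as elements of Cantor space). -/
def TuringLE (B A : ℕ → Bool) : Prop := FnComputableIn (fun n => natOfBool (B n)) A

/-- Turing equivalence. -/
def TuringEquiv (A B : ℕ → Bool) : Prop := TuringLE A B ∧ TuringLE B A

/-- The Turing join `A ⊕ B`. -/
def joinSet (A B : ℕ → Bool) : ℕ → Bool :=
  fun n => if n % 2 = 0 then A (n / 2) else B (n / 2)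

open Classical in
/-- The Turing jump `A′ = {e : Γ_e^A(e)↓}`. -/
noncomputable def jump (A : ℕ → Bool) : ℕ → Bool :=
  fun e => decide (∃ m, OracleComputes e A e m)

/-- The empty oracle. -/
def emptyOracle : ℕ → Bool := fun _ => false

/-- The halting problem `∅′`. -/
noncomputable def zeroJump : ℕ → Bool := jump emptyOracle

/-- A set is computable iff it is Turing reducible to the empty oracle. -/
def ComputableSet (A : ℕ → Bool) : Prop := TuringLE A emptyOracle

/-- A set of naturals is c.e. in `A`. -/
def CeIn (A : ℕ → Bool) (S : Set ℕ) : Prop :=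
  ∃ e, ∀ n, n ∈ S ↔ ∃ m, OracleComputes e A n m

/-- A set of strings is c.e. in `A`. -/
def CeStrIn (A : ℕ → Bool) (S : Set (List Bool)) : Prop :=
  ∃ e, ∀ σ : List Bool, σ ∈ S ↔ ∃ m, OracleComputes e A (Encodable.encode σ) m

/-- A c.e. set of strings. -/
def CeStr (S : Set (List Bool)) : Prop := CeStrIn emptyOracle S

/-! ### Π⁰₁ classes, Martin-Löf randomness, K-triviality -/

/-- A `Π⁰₁(A)` class: the complement of the union of cylinders over an `A`-c.e.
set of strings. -/
def Pi01In (A : ℕ → Bool) (P : Set (ℕ → Bool)) : Prop :=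
  ∃ S : Set (List Bool), CeStrIn A S ∧ P = (openOf S)ᶜ

/-- A `Π⁰₁` class. -/
def Pi01 (P : Set (ℕ → Bool)) : Prop := Pi01In emptyOracle P

/-- The `n`-th level of the `e`-th `A`-effective sequence of open sets. -/
def testLevel (e : ℕ) (A : ℕ → Bool) (n : ℕ) : Set (ℕ → Bool) :=
  openOf {σ | ∃ m, OracleComputes e A (Nat.pair n (Encodable.encode σ)) m}

/-- A Martin-Löf test relative to `A`: a uniformly `A`-c.e. sequence of open sets
`G n` with `μ(G n) ≤ 2^{-n}`. -/
def MLTestIn (A : ℕ → Bool) (G : ℕ → Set (ℕ → Bool)) : Prop :=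
  (∃ e, ∀ n, G n = testLevel e A n) ∧ ∀ n, μCantor (G n) ≤ 2⁻¹ ^ n

/-- `X` is Martin-Löf random relative to `A`: it passes every `A`-Martin-Löf test. -/
def MLRandomIn (A X : ℕ → Bool) : Prop :=
  ∀ G : ℕ → Set (ℕ → Bool), MLTestIn A G → ∃ n, X ∉ G n

/-- `X` is Martin-Löf random. -/
def MLRandom (X : ℕ → Bool) : Prop := MLRandomIn emptyOracle X

/-- The domain of the `e`-th machine, viewed as a set of binary strings. -/
def machineDom (e : ℕ) : Set (List Bool) :=
  {σ | ((Denumerable.ofNat Nat.Partrec.Code e).eval (Encodable.encode σ)).Dom}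

/-- The `e`-th machine is prefix-free. -/
def PrefixFreeMachine (e : ℕ) : Prop := PrefixFreeSet (machineDom e)

/-- Prefix-free Kolmogorov complexity (defined, up to an additive constant, as the
least `|σ| + 2e + 2` over prefix-free machines `e` and programs `σ` producing `x`). -/
noncomputable def Kcpx (x : ℕ) : ℕ :=
  sInf {k | ∃ e, ∃ σ : List Bool, PrefixFreeMachine e ∧
    x ∈ (Denumerable.ofNat Nat.Partrec.Code e).eval (Encodable.encode σ) ∧
    k = σ.length + 2 * e + 2}

/-- `K(n)` means `K(1^n)`. -/
noncomputable def KofNat (n : ℕ) : ℕ := Kcpx (Encodable.encode (List.replicate n true))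

/-- `A` is K-trivial: `K(A↾n) ≤ K(n) + c` for some constant `c`. -/
def KTrivial (A : ℕ → Bool) : Prop :=
  ∃ c, ∀ n, Kcpx (Encodable.encode (strPrefix A n)) ≤ KofNat n + c


lemma isPrefixOf_iff (σ : List Bool) (X : ℕ → Bool) :
    IsPrefixOf σ X ↔ ∀ i, (h : i < σ.length) → X i = σ[i] := by
  constructor
  · intro h i hi; exact h ⟨i, hi⟩
  · intro h i; exact h i i.isLt

lemma isPrefixOf_append (σ : List Bool) (b : Bool) (X : ℕ → Bool) :
    IsPrefixOf (σ ++ [b]) X ↔ IsPrefixOf σ X ∧ X σ.length = b := by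
  simp only [isPrefixOf_iff]
  constructor
  · intro h
    refine ⟨fun i hi => ?_, ?_⟩
    · have := h i (by simp; omega)
      rwa [List.getElem_append_left hi] at this
    · have := h σ.length (by simp)
      simpa using this
  · rintro ⟨h1, h2⟩ i hi
    simp only [List.length_append, List.length_cons, List.length_nil] at hi
    rcases Nat.lt_or_ge i σ.length with hlt | hge
    · rw [List.getElem_append_left hlt]; exact h1 i hlt
    · have : i = σ.length := by omega
      subst this
      simpa using h2

lemma measurableSet_cylinder (σ : List Bool) : MeasurableSet (_root_.cylinder σ) := by
  have : _root_.cylinder σ = ⋂ i : Fin σ.length, (fun X : ℕ → Bool => X i) ⁻¹' {σ.get i} := by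
    ext X
    simp [_root_.cylinder, IsPrefixOf, Set.mem_iInter]
  rw [this]
  exact MeasurableSet.iInter fun i =>
    (measurable_pi_apply (i : ℕ)) (measurableSet_singleton _)

lemma cylinder_eq_union (σ : List Bool) :
    _root_.cylinder σ = _root_.cylinder (σ ++ [false]) ∪ _root_.cylinder (σ ++ [true]) := by
  ext X
  simp only [_root_.cylinder, Set.mem_setOf_eq, Set.mem_union, isPrefixOf_append]
  constructor
  · intro h
    cases hb : X σ.length
    · exact Or.inl ⟨h, rfl⟩
    · exact Or.inr ⟨h, rfl⟩
  · rintro (⟨h, _⟩ | ⟨h, _⟩) <;> exact h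

lemma cylinder_disjoint (σ : List Bool) :
    Disjoint (_root_.cylinder (σ ++ [false])) (_root_.cylinder (σ ++ [true])) := by
  rw [Set.disjoint_left]
  intro X h1 h2
  rw [_root_.cylinder, Set.mem_setOf_eq, isPrefixOf_append] at h1 h2
  rw [h1.2] at h2
  exact Bool.false_ne_true h2.2

lemma dens_split (P : Set (ℕ → Bool)) (hP : MeasurableSet P) (σ : List Bool) :
    dens (σ ++ [false]) P + dens (σ ++ [true]) P = 2 * dens σ P := by
  have hdisj : Disjoint (_root_.cylinder (σ ++ [false]) ∩ P) (_root_.cylinder (σ ++ [true]) ∩ P) :=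
    (cylinder_disjoint σ).mono (Set.inter_subset_left) (Set.inter_subset_left)
  have hmeas : MeasurableSet (_root_.cylinder (σ ++ [true]) ∩ P) :=
    (measurableSet_cylinder _).inter hP
  have hunion : (_root_.cylinder (σ ++ [false]) ∩ P) ∪ (_root_.cylinder (σ ++ [true]) ∩ P)
      = _root_.cylinder σ ∩ P := by
    rw [← Set.union_inter_distrib_right, ← cylinder_eq_union]
  have hm : μCantor (_root_.cylinder (σ ++ [false]) ∩ P) + μCantor (_root_.cylinder (σ ++ [true]) ∩ P)
      = μCantor (_root_.cylinder σ ∩ P) := by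
    rw [← measure_union hdisj hmeas, hunion]
  simp only [dens, List.length_append, List.length_cons, List.length_nil]
  rw [← hm]
  ring

lemma dens_succ (P : Set (ℕ → Bool)) (hP : MeasurableSet P) (σ : List Bool) :
    ∃ b : Bool, dens σ P ≤ dens (σ ++ [b]) P := by
  by_contra h
  push_neg at h
  have h0 := h false
  have h1 := h true
  have := dens_split P hP σ
  have hlt : dens (σ ++ [false]) P + dens (σ ++ [true]) P < 2 * dens σ P := by
    calc dens (σ ++ [false]) P + dens (σ ++ [true]) P
        < dens σ P + dens σ P := by
          exact ENNReal.add_lt_add h0 h1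
      _ = 2 * dens σ P := by ring
  rw [this] at hlt
  exact lt_irrefl _ hlt

lemma prefixOf_eq {σ ρ : List Bool} {X : ℕ → Bool} (h1 : IsPrefixOf σ X)
    (h2 : IsPrefixOf ρ X) (hl : σ.length = ρ.length) : σ = ρ := by
  rw [isPrefixOf_iff] at h1 h2
  apply List.ext_getElem hl
  intro i hi1 hi2
  rw [← h1 i hi1, ← h2 i hi2]

/-- if `d(τ,P) ≥ δ > 0`, then there is an `X ⊇ τ` all of whose
initial segments extending `τ` have density at least `δ/2` in `P`. -/
theorem stmt1 (P : Set (ℕ → Bool)) (hP : MeasurableSet P) (τ : List Bool)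
    (δ : ℝ≥0∞) (hδ : 0 < δ) (hd : δ ≤ dens τ P) :
    ∃ X : ℕ → Bool, IsPrefixOf τ X ∧
      ∀ σ : List Bool, τ <+: σ → IsPrefixOf σ X → δ / 2 ≤ dens σ P := by
  classical
  -- recursive construction of an increasing chain of strings with nondecreasing density
  choose bit hbit using fun σ => dens_succ P hP σ
  let seq : ℕ → List Bool := fun n => Nat.rec τ (fun _ s => s ++ [bit s]) n
  have hseq0 : seq 0 = τ := rfl
  have hseqS : ∀ n, seq (n + 1) = seq n ++ [bit (seq n)] := fun n => rfl
  have hlen : ∀ n, (seq n).length = τ.length + n := by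
    intro n; induction n with
    | zero => rfl
    | succ n ih => rw [hseqS, List.length_append, ih]; simp; omega
  have hdens : ∀ n, δ ≤ dens (seq n) P := by
    intro n; induction n with
    | zero => exact hd
    | succ n ih => exact le_trans ih (hbit (seq n))
  have hpre : ∀ m n, m ≤ n → seq m <+: seq n := by
    intro m n h
    induction n with
    | zero => simp_all
    | succ n ih =>
      rcases Nat.lt_or_ge m (n + 1) with h' | h'
      · exact (ih (by omega)).trans ⟨[bit (seq n)], (hseqS n).symm⟩
      · have : m = n + 1 := by omega
        subst this; exact List.prefix_refl _
  -- the limit sequence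
  set X : ℕ → Bool := fun n => (seq (n + 1)).getD n false with hX
  have hXpre : ∀ n, IsPrefixOf (seq n) X := by
    intro n
    rw [isPrefixOf_iff]
    intro i hi
    have hi1 : i < (seq (i + 1)).length := by have := hlen (i + 1); omega
    have hXi : X i = (seq (i + 1))[i] := by
      simp [hX, List.getD, List.getElem?_eq_getElem hi1]
    rw [hXi]
    rcases Nat.le_total (i + 1) n with h' | h'
    · exact (List.IsPrefix.getElem (hpre _ _ h') hi1).symm ▸ rfl
    · exact ((hpre _ _ h').getElem hi).symm
  refine ⟨X, by simpa [hseq0] using hXpre 0, ?_⟩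
  intro σ hτσ hσX
  have hlenτ : τ.length ≤ σ.length := hτσ.length_le
  have : σ = seq (σ.length - τ.length) := by
    apply prefixOf_eq hσX (hXpre _)
    rw [hlen]; omega
  rw [this]
  exact le_trans (ENNReal.half_le_self) (hdens _)
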